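/- Let k be a field, n ≥ 1 an integer, and g_n(t) = 2n·d(t) where d(t) is the distance from t to {k/n : k ∈ ℤ}. Let Q be the poset {(i,j) ∈ ℕ × ℕ : i ≤ j ≤ n} with (i,j) ⪯ (i',j') iff i' ≤ i and j ≤ j'. Define the functor N : Q ⥤ ModuleCat k by N(i,j) = the free k-module on the set of connected components of {t ∈ ℝ : i/n ≤ t ≤ j/n and g_n(t) ≤ 1/2}, with structure maps sending the basis element of a component to the basis element of the component containing it. Then N is isomorphic to the direct sum ⊕_{m=0}^{n} P_m, where P_m : Q ⥤ ModuleCat k is the functor with P_m(i,j) = k if i ≤ m ≤ j and P_m(i,j) = 0 otherwise, and with the identity map k → k whenever both values are k and the zero map otherwise. In particular N decomposes into n+1 summands, each pointwise of dimension at most one. -/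

import Mathlib

open CategoryTheory

noncomputable section

/-- The map induced on connected components by an inclusion of subspaces. -/
def compMap {Y : Type} [TopologicalSpace Y] {A B : Set Y} (h : A ⊆ B) :
    ConnectedComponents A → ConnectedComponents B :=
  (continuous_inclusion h).connectedComponentsMap

lemma compMap_id {Y : Type} [TopologicalSpace Y] {A : Set Y} (h : A ⊆ A) :
    compMap h = id := by
  funext x
  obtain ⟨y, rfl⟩ := ConnectedComponents.surjective_coe x
  rfl

lemma compMap_comp {Y : Type} [TopologicalSpace Y] {A B C : Set Y}
    (hAB : A ⊆ B) (hBC : B ⊆ C) (hAC : A ⊆ C) :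
    compMap hAC = compMap hBC ∘ compMap hAB := by
  funext x
  obtain ⟨y, rfl⟩ := ConnectedComponents.surjective_coe x
  rfl

/-- The persistence module (valued in free `k`-modules on connected components)
associated to a monotone family of subspaces indexed by a poset. -/
def compFunctor (k : Type) [Field k] {α : Type} [Preorder α] {Y : Type} [TopologicalSpace Y]
    (A : α → Set Y) (mono : Monotone A) : α ⥤ ModuleCat k where
  obj p := ModuleCat.of k (ConnectedComponents (A p) →₀ k)
  map {p q} h := ModuleCat.ofHom (Finsupp.lmapDomain k k (compMap (mono (leOfHom h))))
  map_id p := by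
    show ModuleCat.ofHom (Finsupp.lmapDomain k k _) = _
    rw [compMap_id]; exact congrArg ModuleCat.ofHom (Finsupp.lmapDomain_id _ _)
  map_comp {p q r} f g := by
    show ModuleCat.ofHom (Finsupp.lmapDomain k k _) = _
    rw [compMap_comp (mono (leOfHom f)) (mono (leOfHom g))]
    exact congrArg ModuleCat.ofHom (Finsupp.lmapDomain_comp _ _ _ _)

/-- The sublevel set `S(a,b,c) = {t ∈ ℝ : a ≤ t ≤ b and g t ≤ c}`. -/
def Slev (g : ℝ → ℝ) (a b c : ℝ) : Set ℝ := {t : ℝ | a ≤ t ∧ t ≤ b ∧ g t ≤ c}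

/-- `g_n(t) = 2n·d(t)` where `d(t)` is the distance from `t` to the set
`{k/n : k ∈ ℤ}`. -/
def gfun (n : ℕ) (t : ℝ) : ℝ := 2 * n * Metric.infDist t {x : ℝ | ∃ k : ℤ, x = k / n}

/-- The poset `Q = {(i,j) ∈ ℕ × ℕ : i ≤ j ≤ n}` with `(i,j) ⪯ (i',j')` iff
`i' ≤ i` and `j ≤ j'`. -/
def QQ (n : ℕ) : Type := {ij : ℕ × ℕ // ij.1 ≤ ij.2 ∧ ij.2 ≤ n}

namespace QQ

variable {n : ℕ}

instance : PartialOrder (QQ n) where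
  le x y := y.1.1 ≤ x.1.1 ∧ x.1.2 ≤ y.1.2
  le_refl x := ⟨le_refl _, le_refl _⟩
  le_trans x y z h h' := ⟨h'.1.trans h.1, h.2.trans h'.2⟩
  le_antisymm x y h h' :=
    Subtype.ext (Prod.ext (le_antisymm h'.1 h.1) (le_antisymm h.2 h'.2))

/-- The first coordinate `i`. -/
def i (q : QQ n) : ℕ := q.1.1
/-- The second coordinate `j`. -/
def j (q : QQ n) : ℕ := q.1.2

end QQ

lemma SlevQ_mono (n : ℕ) :
    Monotone (fun q : QQ n => Slev (gfun n) ((q.i : ℝ) / n) ((q.j : ℝ) / n) (1 / 2)) := by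
  intro q q' h t ht
  have hn : (0 : ℝ) ≤ n := Nat.cast_nonneg n
  refine ⟨le_trans ?_ ht.1, le_trans ht.2.1 ?_, ht.2.2⟩
  · exact div_le_div_of_nonneg_right (by exact_mod_cast h.1) hn
  · exact div_le_div_of_nonneg_right (by exact_mod_cast h.2) hn

/-- The persistence module `N : Q ⥤ ModuleCat k`, assigning to `(i,j)` the free
`k`-module on the set of connected components of `S(i/n, j/n, 1/2)` for the function
`g_n`. -/
def Nfunctor (k : Type) [Field k] (n : ℕ) : QQ n ⥤ ModuleCat k :=
  compFunctor k (fun q : QQ n => Slev (gfun n) ((q.i : ℝ) / n) ((q.j : ℝ) / n) (1 / 2))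
    (SlevQ_mono n)

/-- The interval module `P_m : Q ⥤ ModuleCat k`:  its value at `(i,j)` is the free
`k`-module on a one-element type if `i ≤ m ≤ j` (hence isomorphic to `k`) and the free
`k`-module on the empty type (hence `0`) otherwise, and its structure maps send a basis
element to the corresponding basis element (the identity `k → k`) whenever both values
are nonzero, and are zero otherwise. -/
def Pm (k : Type) [Field k] (n m : ℕ) : QQ n ⥤ ModuleCat k where
  obj q := ModuleCat.of k (PLift (q.i ≤ m ∧ m ≤ q.j) →₀ k)
  map {q q'} h := ModuleCat.ofHom (Finsupp.lmapDomain k k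
    (fun hp => PLift.up ⟨le_trans (leOfHom h).1 hp.down.1, hp.down.2.trans (leOfHom h).2⟩))
  map_id q := by
    show ModuleCat.ofHom (Finsupp.lmapDomain k k _) = _
    rw [show (fun hp : PLift (q.i ≤ m ∧ m ≤ q.j) =>
        PLift.up (⟨le_trans (leOfHom (𝟙 q)).1 hp.down.1, hp.down.2.trans (leOfHom (𝟙 q)).2⟩ :
          q.i ≤ m ∧ m ≤ q.j)) = id from funext fun _ => Subsingleton.elim _ _]
    exact congrArg ModuleCat.ofHom (Finsupp.lmapDomain_id _ _)
  map_comp {q q' q''} f g := by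
    show ModuleCat.ofHom (Finsupp.lmapDomain k k _) = _
    rw [show (fun hp : PLift (q.i ≤ m ∧ m ≤ q.j) =>
        (PLift.up ⟨le_trans (leOfHom (f ≫ g)).1 hp.down.1,
          hp.down.2.trans (leOfHom (f ≫ g)).2⟩ : PLift (q''.i ≤ m ∧ m ≤ q''.j))) =
        (fun hp : PLift (q'.i ≤ m ∧ m ≤ q'.j) =>
          (PLift.up ⟨le_trans (leOfHom g).1 hp.down.1, hp.down.2.trans (leOfHom g).2⟩ :
            PLift (q''.i ≤ m ∧ m ≤ q''.j))) ∘
        (fun hp : PLift (q.i ≤ m ∧ m ≤ q.j) =>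
          (PLift.up ⟨le_trans (leOfHom f).1 hp.down.1, hp.down.2.trans (leOfHom f).2⟩ :
            PLift (q'.i ≤ m ∧ m ≤ q'.j))) from funext fun _ => Subsingleton.elim _ _]
    exact congrArg ModuleCat.ofHom (Finsupp.lmapDomain_comp _ _ _ _)

end

attribute [local instance] CategoryTheory.Abelian.hasFiniteBiproducts

noncomputable section

namespace NfD

variable {n : ℕ}

@[reducible] def Sq (n : ℕ) (q : QQ n) : Set ℝ := Slev (gfun n) ((q.i : ℝ) / n) ((q.j : ℝ) / n) (1 / 2)

lemma dist_lattice (hn : 0 < n) (t : ℝ) (m : ℤ) :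
    dist t ((m : ℝ) / n) = |(n : ℝ) * t - m| / n := by
  have hn' : (0 : ℝ) < n := by exact_mod_cast hn
  rw [Real.dist_eq]
  rw [show t - (m : ℝ) / n = ((n : ℝ) * t - m) / n by field_simp]
  rw [abs_div, abs_of_pos hn']

lemma infDist_eq (hn : 0 < n) (t : ℝ) :
    Metric.infDist t {x : ℝ | ∃ k : ℤ, x = (k : ℝ) / n}
      = |(n : ℝ) * t - round ((n : ℝ) * t)| / n := by
  have hn' : (0 : ℝ) < n := by exact_mod_cast hn
  apply le_antisymm
  · rw [← dist_lattice hn t (round ((n : ℝ) * t))]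
    exact Metric.infDist_le_dist_of_mem ⟨_, rfl⟩
  · rw [Metric.infDist_eq_iInf]
    haveI : Nonempty {x : ℝ // x ∈ {x : ℝ | ∃ k : ℤ, x = (k : ℝ) / n}} :=
      ⟨⟨0, ⟨0, by simp⟩⟩⟩
    apply le_ciInf
    rintro ⟨y, k, rfl⟩
    rw [dist_lattice hn]
    exact div_le_div_of_nonneg_right (round_le _ _) hn'.le

lemma mem_Sq (hn : 0 < n) {q : QQ n} {t : ℝ} :
    t ∈ Sq n q ↔ (q.i : ℝ) ≤ n * t ∧ (n : ℝ) * t ≤ q.j ∧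
      |(n : ℝ) * t - round ((n : ℝ) * t)| ≤ 4⁻¹ := by
  have hn' : (0 : ℝ) < n := by exact_mod_cast hn
  have h1 : (q.i : ℝ) / n ≤ t ↔ (q.i : ℝ) ≤ n * t := by
    rw [div_le_iff₀ hn', mul_comm]
  have h2 : t ≤ (q.j : ℝ) / n ↔ (n : ℝ) * t ≤ q.j := by
    rw [le_div_iff₀ hn', mul_comm]
  have h3 : gfun n t ≤ 1 / 2 ↔ |(n : ℝ) * t - round ((n : ℝ) * t)| ≤ 4⁻¹ := by
    unfold gfun
    rw [infDist_eq hn]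
    rw [show 2 * (n : ℝ) * (|(n : ℝ) * t - round ((n : ℝ) * t)| / n)
        = 2 * |(n : ℝ) * t - round ((n : ℝ) * t)| by field_simp]
    constructor <;> intro h <;> linarith
  exact ⟨fun ht => ⟨h1.1 ht.1, h2.1 ht.2.1, h3.1 ht.2.2⟩,
    fun ht => ⟨h1.2 ht.1, h2.2 ht.2.1, h3.2 ht.2.2⟩⟩

def lab (n : ℕ) (t : ℝ) : ℕ := (round ((n : ℝ) * t)).toNat

lemma round_bounds (hn : 0 < n) {q : QQ n} {t : ℝ} (ht : t ∈ Sq n q) :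
    (q.i : ℤ) ≤ round ((n : ℝ) * t) ∧ round ((n : ℝ) * t) ≤ (q.j : ℤ) := by
  obtain ⟨h1, h2, h3⟩ := (mem_Sq hn).1 ht
  obtain ⟨h3a, h3b⟩ := abs_le.1 h3
  constructor
  · have : (q.i : ℝ) < (round ((n : ℝ) * t) : ℝ) + 1 := by linarith
    have := (by exact_mod_cast this : (q.i : ℤ) < round ((n : ℝ) * t) + 1)
    omega
  · have : (round ((n : ℝ) * t) : ℝ) < (q.j : ℝ) + 1 := by linarith
    have := (by exact_mod_cast this : round ((n : ℝ) * t) < (q.j : ℤ) + 1)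
    omega

lemma lab_coe (hn : 0 < n) {q : QQ n} {t : ℝ} (ht : t ∈ Sq n q) :
    (lab n t : ℤ) = round ((n : ℝ) * t) :=
  Int.toNat_of_nonneg (le_trans (by positivity) (round_bounds hn ht).1)

lemma lab_bounds (hn : 0 < n) {q : QQ n} {t : ℝ} (ht : t ∈ Sq n q) :
    q.i ≤ lab n t ∧ lab n t ≤ q.j := by
  have h := round_bounds hn ht
  rw [← lab_coe hn ht] at h
  exact ⟨by exact_mod_cast h.1, by exact_mod_cast h.2⟩

lemma lab_local (hn : 0 < n) (q : QQ n) (x y : (Sq n q))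
    (hd : dist (y : ℝ) (x : ℝ) < (4 * (n : ℝ))⁻¹) : lab n y = lab n x := by
  have hn' : (0 : ℝ) < n := by exact_mod_cast hn
  have hx := ((mem_Sq hn).1 x.2).2.2
  have hy := ((mem_Sq hn).1 y.2).2.2
  have hxy : |(n : ℝ) * y - (n : ℝ) * x| < 4⁻¹ := by
    rw [Real.dist_eq] at hd
    rw [show (n : ℝ) * y - (n : ℝ) * x = n * ((y : ℝ) - x) by ring, abs_mul,
      abs_of_pos hn']
    calc (n : ℝ) * |(y : ℝ) - x| < n * (4 * (n : ℝ))⁻¹ := by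
          exact mul_lt_mul_of_pos_left hd hn'
      _ = 4⁻¹ := by field_simp
  have key : |(round ((n : ℝ) * (y : ℝ)) : ℝ) - round ((n : ℝ) * (x : ℝ))| < 1 := by
    have a1 := abs_le.1 hx
    have a2 := abs_le.1 hy
    have a3 := abs_lt.1 hxy
    rw [abs_lt]
    constructor <;> linarith
  have : |round ((n : ℝ) * (y : ℝ)) - round ((n : ℝ) * (x : ℝ))| < 1 := by
    exact_mod_cast (by push_cast; exact key :
      |((round ((n : ℝ) * (y : ℝ)) - round ((n : ℝ) * (x : ℝ)) : ℤ) : ℝ)| < ((1 : ℤ) : ℝ))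
  have := Int.abs_lt_one_iff.1 this
  unfold lab
  rw [sub_eq_zero.1 this]

lemma continuous_lab (hn : 0 < n) (q : QQ n) :
    Continuous (fun x : (Sq n q) => lab n (x : ℝ)) := by
  apply IsLocallyConstant.continuous
  rw [IsLocallyConstant.iff_exists_open]
  intro x
  refine ⟨Metric.ball x (4 * (n : ℝ))⁻¹, Metric.isOpen_ball,
    Metric.mem_ball_self (by positivity), fun y hy => ?_⟩
  apply lab_local hn q x y
  rw [Metric.mem_ball, Subtype.dist_eq] at hy
  exact hy

def ℓ (hn : 0 < n) (q : QQ n) : _root_.ConnectedComponents (Sq n q) → ℕ :=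
  (continuous_lab hn q).connectedComponentsLift

lemma ℓ_coe (hn : 0 < n) (q : QQ n) (x : (Sq n q)) :
    ℓ hn q x = lab n (x : ℝ) :=
  Continuous.connectedComponentsLift_apply_coe _ _

lemma ℓ_bounds (hn : 0 < n) (q : QQ n) (c : _root_.ConnectedComponents (Sq n q)) :
    q.i ≤ ℓ hn q c ∧ ℓ hn q c ≤ q.j := by
  obtain ⟨x, rfl⟩ := _root_.ConnectedComponents.surjective_coe c
  rw [ℓ_coe]
  exact lab_bounds hn x.2

lemma pt_mem (hn : 0 < n) (q : QQ n) {m : ℕ} (h : q.i ≤ m ∧ m ≤ q.j) :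
    ((m : ℝ) / n) ∈ Sq n q := by
  have hn' : (0 : ℝ) < n := by exact_mod_cast hn
  rw [mem_Sq hn]
  have hmn : (n : ℝ) * ((m : ℝ) / n) = m := by field_simp
  rw [hmn]
  refine ⟨by exact_mod_cast h.1, by exact_mod_cast h.2, ?_⟩
  rw [show ((m : ℝ) : ℝ) = ((m : ℤ) : ℝ) by push_cast; ring, round_intCast]
  simp

def pt (hn : 0 < n) (q : QQ n) (m : ℕ) (h : q.i ≤ m ∧ m ≤ q.j) : (Sq n q) :=
  ⟨(m : ℝ) / n, pt_mem hn q h⟩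

lemma lab_pt (hn : 0 < n) (q : QQ n) (m : ℕ) (h : q.i ≤ m ∧ m ≤ q.j) :
    lab n ((pt hn q m h : ℝ)) = m := by
  have hn' : (0 : ℝ) < n := by exact_mod_cast hn
  unfold lab pt
  have hmn : (n : ℝ) * ((m : ℝ) / n) = ((m : ℤ) : ℝ) := by push_cast; field_simp
  simp only [hmn, round_intCast]
  simp

lemma ℓ_inj (hn : 0 < n) (q : QQ n) : Function.Injective (ℓ hn q) := by
  have hn' : (0 : ℝ) < n := by exact_mod_cast hn
  suffices key : ∀ a b : (Sq n q), (a : ℝ) ≤ b →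
      round ((n : ℝ) * (a : ℝ)) = round ((n : ℝ) * (b : ℝ)) →
      (a : _root_.ConnectedComponents (Sq n q)) = b by
    intro c c' h
    obtain ⟨x, rfl⟩ := _root_.ConnectedComponents.surjective_coe c
    obtain ⟨x', rfl⟩ := _root_.ConnectedComponents.surjective_coe c'
    rw [ℓ_coe, ℓ_coe] at h
    have hr : round ((n : ℝ) * (x : ℝ)) = round ((n : ℝ) * (x' : ℝ)) := by
      rw [← lab_coe hn x.2, ← lab_coe hn x'.2, h]
    rcases le_total (x : ℝ) (x' : ℝ) with hle | hle
    · exact key x x' hle hr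
    · exact (key x' x hle hr.symm).symm
  intro a b hab hre
  have hIcc : Set.Icc (a : ℝ) (b : ℝ) ⊆ Sq n q := by
    intro s hs
    obtain ⟨ha1, ha2, ha3⟩ := (mem_Sq hn).1 a.2
    obtain ⟨hb1, hb2, hb3⟩ := (mem_Sq hn).1 b.2
    rw [← hre] at hb3
    rw [mem_Sq hn]
    have hsa : (n : ℝ) * (a : ℝ) ≤ n * s := by nlinarith [hs.1]
    have hsb : (n : ℝ) * s ≤ n * (b : ℝ) := by nlinarith [hs.2]
    refine ⟨le_trans ha1 hsa, le_trans hsb hb2, ?_⟩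
    refine le_trans (round_le _ (round ((n : ℝ) * (a : ℝ)))) (abs_le.2 ⟨?_, ?_⟩)
    · have := (abs_le.1 ha3).1; linarith
    · have := (abs_le.1 hb3).2; linarith
  have hpre : _root_.IsPreconnected (Subtype.val ⁻¹' Set.Icc (a : ℝ) (b : ℝ) : Set (Sq n q)) := by
    rw [← Topology.IsInducing.subtypeVal.isPreconnected_image]
    have himg : (Subtype.val : (Sq n q) → ℝ) '' (Subtype.val ⁻¹' Set.Icc (a : ℝ) (b : ℝ))
        = Set.Icc (a : ℝ) (b : ℝ) := by
      rw [Subtype.image_preimage_coe]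
      exact Set.inter_eq_right.2 hIcc
    rw [himg]
    exact isPreconnected_Icc
  have hmem_a : a ∈ (Subtype.val ⁻¹' Set.Icc (a : ℝ) (b : ℝ) : Set (Sq n q)) :=
    ⟨le_refl _, hab⟩
  have hmem_b : b ∈ (Subtype.val ⁻¹' Set.Icc (a : ℝ) (b : ℝ) : Set (Sq n q)) :=
    ⟨hab, le_refl _⟩
  have hb' : b ∈ connectedComponent a :=
    hpre.subset_connectedComponent hmem_a hmem_b
  exact (_root_.ConnectedComponents.coe_eq_coe'.2 hb').symm

lemma ℓ_pt (hn : 0 < n) (q : QQ n) (m : ℕ) (h : q.i ≤ m ∧ m ≤ q.j) :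
    ℓ hn q (pt hn q m h) = m := by
  rw [ℓ_coe, lab_pt]

lemma compMap_coe {Y : Type} [TopologicalSpace Y] {A B : Set Y} (h : A ⊆ B) (x : A) :
    compMap h (x : _root_.ConnectedComponents A)
      = ((Set.inclusion h x : B) : _root_.ConnectedComponents B) := rfl

lemma ℓ_compMap (hn : 0 < n) {q q' : QQ n} (h : Sq n q ⊆ Sq n q')
    (c : _root_.ConnectedComponents (Sq n q)) :
    ℓ hn q' (compMap h c) = ℓ hn q c := by
  obtain ⟨x, rfl⟩ := _root_.ConnectedComponents.surjective_coe c
  rw [compMap_coe, ℓ_coe, ℓ_coe]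

lemma compMap_pt (hn : 0 < n) {q q' : QQ n} (h : Sq n q ⊆ Sq n q') (m : ℕ)
    (hm : q.i ≤ m ∧ m ≤ q.j) (hm' : q'.i ≤ m ∧ m ≤ q'.j) :
    compMap h ((pt hn q m hm : _root_.ConnectedComponents (Sq n q)))
      = (pt hn q' m hm' : _root_.ConnectedComponents (Sq n q')) := by
  rw [compMap_coe]
  rfl



section ModulePart

variable (k : Type) [Field k] {n : ℕ}

def πapp (hn : 0 < n) (m : ℕ) (q : QQ n) :
    (_root_.ConnectedComponents (Sq n q) →₀ k) →ₗ[k] (PLift (q.i ≤ m ∧ m ≤ q.j) →₀ k) :=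
  Finsupp.lsum k fun c =>
    if h : ℓ hn q c = m then
      Finsupp.lsingle (PLift.up ⟨h ▸ (ℓ_bounds hn q c).1, h ▸ (ℓ_bounds hn q c).2⟩)
    else 0

def ιapp (hn : 0 < n) (m : ℕ) (q : QQ n) :
    (PLift (q.i ≤ m ∧ m ≤ q.j) →₀ k) →ₗ[k] (_root_.ConnectedComponents (Sq n q) →₀ k) :=
  Finsupp.lmapDomain k k fun hp =>
    ((pt hn q m hp.down : (Sq n q)) : _root_.ConnectedComponents (Sq n q))

lemma single_plift_eq {P : Prop} (p p' : PLift P) (b : k) :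
    Finsupp.single p b = Finsupp.single p' b := by
  congr 1
  exact Subsingleton.elim _ _

lemma πapp_single_of_eq (hn : 0 < n) {m : ℕ} {q : QQ n}
    {c : _root_.ConnectedComponents (Sq n q)} (h : ℓ hn q c = m)
    (p : PLift (q.i ≤ m ∧ m ≤ q.j)) (b : k) :
    πapp k hn m q (Finsupp.single c b) = Finsupp.single p b := by
  unfold πapp
  rw [Finsupp.lsum_single, dif_pos h, Finsupp.lsingle_apply]
  all_goals exact single_plift_eq k _ _ _

lemma πapp_single_of_ne (hn : 0 < n) {m : ℕ} {q : QQ n}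
    {c : _root_.ConnectedComponents (Sq n q)} (h : ℓ hn q c ≠ m) (b : k) :
    πapp k hn m q (Finsupp.single c b) = 0 := by
  unfold πapp
  rw [Finsupp.lsum_single, dif_neg h]
  rfl

lemma ιapp_single (hn : 0 < n) (m : ℕ) (q : QQ n) (p : PLift (q.i ≤ m ∧ m ≤ q.j)) (b : k) :
    ιapp k hn m q (Finsupp.single p b)
      = Finsupp.single ((pt hn q m p.down : (Sq n q)) :
          _root_.ConnectedComponents (Sq n q)) b := by
  unfold ιapp
  rw [Finsupp.lmapDomain_apply, Finsupp.mapDomain_single]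

lemma Nmap_single (hn : 0 < n) {q q' : QQ n} (h : q ⟶ q')
    (c : _root_.ConnectedComponents (Sq n q)) (b : k) :
    (Nfunctor k n).map h (Finsupp.single c b)
      = Finsupp.single (compMap (SlevQ_mono n (leOfHom h)) c) b := by
  show Finsupp.lmapDomain k k (compMap (SlevQ_mono n (leOfHom h))) (Finsupp.single c b) = _
  rw [Finsupp.lmapDomain_apply, Finsupp.mapDomain_single]

lemma Pmap_single (hn : 0 < n) {m : ℕ} {q q' : QQ n} (h : q ⟶ q')
    (p : PLift (q.i ≤ m ∧ m ≤ q.j)) (b : k) :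
    (Pm k n m).map h (Finsupp.single p b)
      = Finsupp.single (PLift.up ⟨le_trans (leOfHom h).1 p.down.1,
          p.down.2.trans (leOfHom h).2⟩) b := by
  show Finsupp.lmapDomain k k _ (Finsupp.single p b) = _
  rw [Finsupp.lmapDomain_apply, Finsupp.mapDomain_single]

def πnat (hn : 0 < n) (m : ℕ) : Nfunctor k n ⟶ Pm k n m where
  app q := ModuleCat.ofHom (πapp k hn m q)
  naturality {q q'} h := by
    apply ModuleCat.hom_ext
    apply Finsupp.lhom_ext
    intro c b
    erw [ModuleCat.hom_comp, ModuleCat.hom_comp, LinearMap.comp_apply, LinearMap.comp_apply,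
      ModuleCat.hom_ofHom, ModuleCat.hom_ofHom]
    erw [Nmap_single k hn h c b]
    by_cases hc : ℓ hn q c = m
    · have hc' : ℓ hn q' (compMap (SlevQ_mono n (leOfHom h)) c) = m := by
        rw [ℓ_compMap hn _ c]; exact hc
      have hb1 : q.i ≤ m ∧ m ≤ q.j := ⟨hc ▸ (ℓ_bounds hn q c).1, hc ▸ (ℓ_bounds hn q c).2⟩
      have hb2 : q'.i ≤ m ∧ m ≤ q'.j :=
        ⟨le_trans (leOfHom h).1 hb1.1, hb1.2.trans (leOfHom h).2⟩
      beta_reduce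
      erw [πapp_single_of_eq k hn hc' (PLift.up hb2) b,
        πapp_single_of_eq k hn hc (PLift.up hb1) b, Pmap_single k hn h _ b]
      all_goals exact single_plift_eq k _ _ _
    · have hc' : ℓ hn q' (compMap (SlevQ_mono n (leOfHom h)) c) ≠ m := by
        rw [ℓ_compMap hn _ c]; exact hc
      beta_reduce
      erw [πapp_single_of_ne k hn hc' b, πapp_single_of_ne k hn hc b, map_zero]
      rfl

def ιnat (hn : 0 < n) (m : ℕ) : Pm k n m ⟶ Nfunctor k n where
  app q := ModuleCat.ofHom (ιapp k hn m q)
  naturality {q q'} h := by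
    apply ModuleCat.hom_ext
    apply Finsupp.lhom_ext
    intro p b
    erw [ModuleCat.hom_comp, ModuleCat.hom_comp, LinearMap.comp_apply, LinearMap.comp_apply,
      ModuleCat.hom_ofHom, ModuleCat.hom_ofHom]
    erw [Pmap_single k hn h p b, ιapp_single, ιapp_single, Nmap_single k hn h _ b]
    rw [compMap_pt hn _ m p.down _]

lemma ι_π_same (hn : 0 < n) (m : ℕ) :
    ιnat k hn m ≫ πnat k hn m = 𝟙 (Pm k n m) := by
  apply NatTrans.ext
  funext q
  rw [NatTrans.comp_app, NatTrans.id_app]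
  apply ModuleCat.hom_ext
  apply Finsupp.lhom_ext
  intro p b
  show πapp k hn m q (ιapp k hn m q (Finsupp.single p b)) = Finsupp.single p b
  rw [ιapp_single]
  exact πapp_single_of_eq k hn (ℓ_pt hn q m p.down) p b

lemma ι_π_ne (hn : 0 < n) {m m' : ℕ} (hm : m ≠ m') :
    ιnat k hn m ≫ πnat k hn m' = 0 := by
  apply NatTrans.ext
  funext q
  rw [NatTrans.comp_app]
  apply ModuleCat.hom_ext
  apply Finsupp.lhom_ext
  intro p b
  show πapp k hn m' q (ιapp k hn m q (Finsupp.single p b)) = _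
  rw [ιapp_single, πapp_single_of_ne k hn (by rw [ℓ_pt hn q m p.down]; exact hm) b]
  rfl

lemma sum_π_ι (hn : 0 < n) :
    (∑ m : Fin (n + 1), πnat k hn (m : ℕ) ≫ ιnat k hn (m : ℕ)) = 𝟙 (Nfunctor k n) := by
  apply NatTrans.ext
  funext q
  rw [NatTrans.app_sum, NatTrans.id_app]
  apply ModuleCat.hom_ext
  apply Finsupp.lhom_ext
  intro c b
  have hsum : ∀ (f : Fin (n + 1) → ((Nfunctor k n).obj q ⟶ (Nfunctor k n).obj q)) (x),
      (∑ m : Fin (n + 1), f m) x = ∑ m : Fin (n + 1), f m x := fun f x => by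
    exact (congrArg (fun g => g x) (ModuleCat.hom_sum f Finset.univ)).trans (LinearMap.sum_apply _ _ _)
  erw [hsum]
  have hjn : ℓ hn q c < n + 1 :=
    Nat.lt_succ_of_le (le_trans (ℓ_bounds hn q c).2 q.2.2)
  rw [Finset.sum_eq_single (⟨ℓ hn q c, hjn⟩ : Fin (n + 1))]
  · rw [NatTrans.comp_app]
    show ιapp k hn _ q (πapp k hn _ q (Finsupp.single c b)) = _
    have hb : q.i ≤ ℓ hn q c ∧ ℓ hn q c ≤ q.j := ℓ_bounds hn q c
    rw [πapp_single_of_eq k hn rfl (PLift.up hb) b, ιapp_single]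
    congr 1
    apply ℓ_inj hn q
    rw [ℓ_pt hn q _ _]
  · intro m _ hm
    rw [NatTrans.comp_app]
    show ιapp k hn _ q (πapp k hn _ q (Finsupp.single c b)) = 0
    have : ℓ hn q c ≠ (m : ℕ) := by
      intro hEq
      apply hm
      apply Fin.ext
      simp [← hEq]
    rw [πapp_single_of_ne k hn this b, map_zero]
  · intro hmem
    exact absurd (Finset.mem_univ _) hmem

end ModulePart

end NfD

end


open CategoryTheory.Limits in
/-- **Decomposition of the two-parameter persistence module of `g_n` at level `1/2`**
(Section `sec:arb-dim`).  The functor `N : Q ⥤ ModuleCat k` is isomorphic to the direct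
sum `⊕_{m=0}^{n} P_m` of the interval modules `P_m`; in particular `N` decomposes into
`n+1` summands, each pointwise of dimension at most one. -/
theorem Nfunctor_decomposition (k : Type) [Field k] (n : ℕ) (hn : 1 ≤ n) :
    Nonempty (Nfunctor k n ≅ ⨁ fun m : Fin (n + 1) => Pm k n (m : ℕ)) ∧
    (∀ (m : Fin (n + 1)) (q : QQ n), Module.finrank k ((Pm k n (m : ℕ)).obj q) ≤ 1) := by
  have hn0 : 0 < n := hn
  constructor
  · refine ⟨⟨biproduct.lift (fun m : Fin (n + 1) => NfD.πnat k hn0 (m : ℕ)),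
      biproduct.desc (fun m : Fin (n + 1) => NfD.ιnat k hn0 (m : ℕ)), ?_, ?_⟩⟩
    · rw [biproduct.lift_desc]
      exact NfD.sum_π_ι k hn0
    · apply biproduct.hom_ext
      intro m'
      apply biproduct.hom_ext'
      intro m
      rw [Category.assoc, biproduct.lift_π, biproduct.ι_desc_assoc, Category.id_comp,
        biproduct.ι_π]
      by_cases hmm : m = m'
      · subst hmm
        rw [dif_pos rfl, eqToHom_refl]
        exact NfD.ι_π_same k hn0 (m : ℕ)
      · rw [dif_neg hmm]
        exact NfD.ι_π_ne k hn0 (fun h => hmm (Fin.ext h))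
  · intro m q
    show Module.finrank k (PLift (q.i ≤ (m : ℕ) ∧ (m : ℕ) ≤ q.j) →₀ k) ≤ 1
    haveI : Finite (PLift (q.i ≤ (m : ℕ) ∧ (m : ℕ) ≤ q.j)) := Finite.of_subsingleton
    haveI := Fintype.ofFinite (PLift (q.i ≤ (m : ℕ) ∧ (m : ℕ) ≤ q.j))
    rw [Module.finrank_finsupp_self]
    exact Fintype.card_le_one_iff_subsingleton.2 inferInstance
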